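/- Define sequences B_n(N) for n ≥ 1, N ≥ 0 by B_n(0) = (3/r)^n (for a fixed r > 0) and the recursion (N+1)B_n(N+1) = 3·∑_{d=0}^{N} ∑_{j=1}^{n} B_j(d)B_{n+1−j}(N−d) + 2n·B_{n+1}(N). Then there exist constants C, M > 0 such that B_1(N) ≤ C·M^N for all N ≥ 0. -/

import Mathlib

open Finset

lemma hockey (a : ℕ) : ∀ N, ∑ d ∈ range (N+1), (a+d).choose d = (a+N+1).choose N := by
  intro N
  induction N with
  | zero => simp
  | succ N ih =>
    rw [Finset.sum_range_succ, ih]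
    have h1 : a + (N+1) = a + N + 1 := by omega
    rw [h1]
    exact (Nat.choose_succ_succ (a+N+1) N).symm

lemma convId (a : ℕ) : ∀ b N, ∑ d ∈ range (N+1), (a+d).choose d * (b+(N-d)).choose (N-d)
    = (a+b+N+1).choose N := by
  intro b
  induction b with
  | zero => intro N; simpa using hockey a N
  | succ b ih =>
    intro N
    induction N with
    | zero => simp
    | succ N ihN =>
      have split : ∀ d ∈ range (N+1),
          (a+d).choose d * ((b+1)+((N+1)-d)).choose ((N+1)-d)
          = (a+d).choose d * (b+((N+1)-d)).choose ((N+1)-d)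
            + (a+d).choose d * ((b+1)+(N-d)).choose (N-d) := by
        intro d hd
        have hdN : d ≤ N := by simpa [Nat.lt_succ_iff] using hd
        have h1 : (N+1) - d = (N - d) + 1 := by omega
        have h2 : (b+1) + ((N-d)+1) = (b + (N-d) + 1) + 1 := by omega
        have h3 : b + ((N-d)+1) = (b + (N-d)) + 1 := by omega
        have h4 : (b+1) + (N-d) = (b + (N-d)) + 1 := by omega
        rw [h1, h2, h3, h4, Nat.choose_succ_succ, Nat.mul_add]
        ring
      have e1 : ∑ d ∈ range (N+2), (a+d).choose d * ((b+1)+((N+1)-d)).choose ((N+1)-d)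
          = (∑ d ∈ range (N+1), ((a+d).choose d * (b+((N+1)-d)).choose ((N+1)-d)
              + (a+d).choose d * ((b+1)+(N-d)).choose (N-d)))
            + (a+(N+1)).choose (N+1) := by
        rw [Finset.sum_range_succ, Finset.sum_congr rfl split]
        norm_num
      have e2 : ∑ d ∈ range (N+2), (a+d).choose d * (b+((N+1)-d)).choose ((N+1)-d)
          = ∑ d ∈ range (N+1), (a+d).choose d * (b+((N+1)-d)).choose ((N+1)-d)
            + (a+(N+1)).choose (N+1) := by
        rw [Finset.sum_range_succ]
        norm_num
      have hS : ∑ d ∈ range (N+1), (a+d).choose d * (b+((N+1)-d)).choose ((N+1)-d)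
            + (a+(N+1)).choose (N+1) = (a+b+(N+1)+1).choose (N+1) := by
        rw [← e2]; exact ih (N+1)
      rw [e1, Finset.sum_add_distrib]
      calc ∑ d ∈ range (N+1), (a+d).choose d * (b+((N+1)-d)).choose ((N+1)-d)
            + ∑ d ∈ range (N+1), (a+d).choose d * ((b+1)+(N-d)).choose (N-d)
            + (a+(N+1)).choose (N+1)
          = (∑ d ∈ range (N+1), (a+d).choose d * (b+((N+1)-d)).choose ((N+1)-d)
              + (a+(N+1)).choose (N+1))
            + ∑ d ∈ range (N+1), (a+d).choose d * ((b+1)+(N-d)).choose (N-d) := by ring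
        _ = (a+b+(N+1)+1).choose (N+1) + (a+(b+1)+N+1).choose N := by rw [hS, ihN]
        _ = (a+(b+1)+(N+1)+1).choose (N+1) := by
            have h5 : a+(b+1)+(N+1)+1 = (a+b+N+2)+1 := by omega
            have h6 : a+b+(N+1)+1 = a+b+N+2 := by omega
            have h7 : a+(b+1)+N+1 = a+b+N+2 := by omega
            rw [h5, h6, h7, Nat.choose_succ_succ (a+b+N+2) N]
            exact Nat.add_comm _ _


theorem stmt19 (r : ℝ) (hr : 0 < r) (B : ℕ → ℕ → ℝ)
    (hB0 : ∀ n : ℕ, 1 ≤ n → B n 0 = (3 / r) ^ n)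
    (hrec : ∀ n : ℕ, 1 ≤ n → ∀ N : ℕ,
      ((N : ℝ) + 1) * B n (N + 1) =
        3 * ∑ d ∈ Finset.range (N + 1), ∑ j ∈ Finset.Icc 1 n, B j d * B (n + 1 - j) (N - d)
          + 2 * (n : ℝ) * B (n + 1) N) :
    ∃ C M : ℝ, 0 < C ∧ 0 < M ∧ ∀ N : ℕ, B 1 N ≤ C * M ^ N := by
  have hq : (0:ℝ) < 3 / r := by positivity
  have hm : (0:ℝ) < 15 / r := by positivity
  -- nonnegativity
  have hnn : ∀ N n, 1 ≤ n → 0 ≤ B n N := by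
    intro N
    induction N using Nat.strong_induction_on with
    | _ N ih =>
      match N with
      | 0 => intro n hn; rw [hB0 n hn]; positivity
      | (N+1) =>
        intro n hn
        have h := hrec n hn N
        have hsum : 0 ≤ ∑ d ∈ range (N+1), ∑ j ∈ Icc 1 n, B j d * B (n+1-j) (N-d) := by
          apply Finset.sum_nonneg; intro d hd
          apply Finset.sum_nonneg; intro j hj
          obtain ⟨hj1, hj2⟩ := Finset.mem_Icc.mp hj
          have hd' : d < N + 1 := Finset.mem_range.mp hd
          exact mul_nonneg (ih d (by omega) j hj1) (ih (N-d) (by omega) (n+1-j) (by omega))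
        have h2 : 0 ≤ B (n+1) N := ih N (by omega) (n+1) (by omega)
        have hpos : (0:ℝ) < (N:ℝ) + 1 := by positivity
        have : 0 ≤ ((N:ℝ)+1) * B n (N+1) := by rw [h]; positivity
        exact (mul_nonneg_iff_of_pos_left hpos).mp this
  -- main bound
  have hbd : ∀ N n, 1 ≤ n → B n N ≤ (3/r)^n * ((n-1+N).choose N : ℝ) * (15/r)^N := by
    intro N
    induction N using Nat.strong_induction_on with
    | _ N ih =>
      match N with
      | 0 => intro n hn; rw [hB0 n hn]; simp
      | (N+1) =>
        intro n hn
        have h := hrec n hn N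
        -- bound on the double sum
        have hsum : ∑ d ∈ range (N+1), ∑ j ∈ Icc 1 n, B j d * B (n+1-j) (N-d)
            ≤ (3/r)^(n+1) * (15/r)^N * ((n * (n+N).choose N : ℕ) : ℝ) := by
          have hterm : ∀ d ∈ range (N+1), ∀ j ∈ Icc 1 n,
              B j d * B (n+1-j) (N-d)
              ≤ (3/r)^(n+1) * (15/r)^N * (((j-1+d).choose d * ((n-j)+(N-d)).choose (N-d) : ℕ) : ℝ) := by
            intro d hd j hj
            obtain ⟨hj1, hj2⟩ := Finset.mem_Icc.mp hj
            have hd' : d < N + 1 := Finset.mem_range.mp hd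
            have b1 : B j d ≤ (3/r)^j * ((j-1+d).choose d : ℝ) * (15/r)^d :=
              ih d (by omega) j hj1
            have b2 : B (n+1-j) (N-d) ≤ (3/r)^(n+1-j) * (((n+1-j-1)+(N-d)).choose (N-d) : ℝ) * (15/r)^(N-d) :=
              ih (N-d) (by omega) (n+1-j) (by omega)
            have hb1nn : 0 ≤ B j d := hnn d j hj1
            have hb2nn : 0 ≤ B (n+1-j) (N-d) := hnn (N-d) (n+1-j) (by omega)
            have hub1 : (0:ℝ) ≤ (3/r)^j * ((j-1+d).choose d : ℝ) * (15/r)^d := by positivity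
            calc B j d * B (n+1-j) (N-d)
                ≤ ((3/r)^j * ((j-1+d).choose d : ℝ) * (15/r)^d)
                  * ((3/r)^(n+1-j) * (((n+1-j-1)+(N-d)).choose (N-d) : ℝ) * (15/r)^(N-d)) :=
                  mul_le_mul b1 b2 hb2nn hub1
              _ = (3/r)^(n+1) * (15/r)^N * (((j-1+d).choose d * ((n-j)+(N-d)).choose (N-d) : ℕ) : ℝ) := by
                  have e3 : n+1-j-1 = n-j := by omega
                  have p1 : (3/r)^j * (3/r)^(n+1-j) = (3/r)^(n+1) := by
                    rw [← pow_add]; congr 1; omega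
                  have p2 : (15/r)^d * (15/r)^(N-d) = (15/r)^N := by
                    rw [← pow_add]; congr 1; omega
                  rw [e3]
                  push_cast
                  calc (3/r)^j * ((j-1+d).choose d : ℝ) * (15/r)^d *
                        ((3/r)^(n+1-j) * (((n-j)+(N-d)).choose (N-d) : ℝ) * (15/r)^(N-d))
                      = ((3/r)^j * (3/r)^(n+1-j)) * ((15/r)^d * (15/r)^(N-d)) *
                        (((j-1+d).choose d : ℝ) * (((n-j)+(N-d)).choose (N-d) : ℝ)) := by ring
                    _ = (3/r)^(n+1) * (15/r)^N *
                        (((j-1+d).choose d : ℝ) * (((n-j)+(N-d)).choose (N-d) : ℝ)) := by rw [p1, p2]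
          calc ∑ d ∈ range (N+1), ∑ j ∈ Icc 1 n, B j d * B (n+1-j) (N-d)
              ≤ ∑ d ∈ range (N+1), ∑ j ∈ Icc 1 n,
                  (3/r)^(n+1) * (15/r)^N * (((j-1+d).choose d * ((n-j)+(N-d)).choose (N-d) : ℕ) : ℝ) := by
                apply Finset.sum_le_sum; intro d hd
                exact Finset.sum_le_sum (fun j hj => hterm d hd j hj)
            _ = (3/r)^(n+1) * (15/r)^N * ((∑ d ∈ range (N+1), ∑ j ∈ Icc 1 n,
                  (j-1+d).choose d * ((n-j)+(N-d)).choose (N-d) : ℕ) : ℝ) := by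
                push_cast
                simp [Finset.mul_sum]
            _ = (3/r)^(n+1) * (15/r)^N * ((n * (n+N).choose N : ℕ) : ℝ) := by
                congr 2
                rw [Finset.sum_comm]
                have hj : ∀ j ∈ Icc 1 n,
                    ∑ d ∈ range (N+1), (j-1+d).choose d * ((n-j)+(N-d)).choose (N-d)
                    = (n+N).choose N := by
                  intro j hj
                  obtain ⟨hj1, hj2⟩ := Finset.mem_Icc.mp hj
                  rw [convId (j-1) (n-j) N]
                  congr 1
                  omega
                rw [Finset.sum_congr rfl hj, Finset.sum_const, Nat.card_Icc]
                simp [Nat.mul_comm]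
        -- bound on the derivative term
        have hder : B (n+1) N ≤ (3/r)^(n+1) * ((n+N).choose N : ℝ) * (15/r)^N := by
          have := ih N (by omega) (n+1) (by omega)
          simpa using this
        -- combine
        have hCn : ((n+N).choose (N+1) * (N+1) : ℕ) = ((n+N).choose N * n : ℕ) := by
          rw [Nat.choose_succ_right_eq]
          congr 1
          omega
        have hidx : n - 1 + (N+1) = n + N := by omega
        rw [hidx]
        have hpos : (0:ℝ) < (N:ℝ) + 1 := by positivity
        rw [← mul_le_mul_iff_right₀ hpos, h]
        calc 3 * ∑ d ∈ range (N+1), ∑ j ∈ Icc 1 n, B j d * B (n+1-j) (N-d)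
              + 2 * (n:ℝ) * B (n+1) N
            ≤ 3 * ((3/r)^(n+1) * (15/r)^N * ((n * (n+N).choose N : ℕ) : ℝ))
              + 2 * (n:ℝ) * ((3/r)^(n+1) * ((n+N).choose N : ℝ) * (15/r)^N) := by
              have hn0 : (0:ℝ) ≤ 2 * (n:ℝ) := by positivity
              have := mul_le_mul_of_nonneg_left hder hn0
              linarith [mul_le_mul_of_nonneg_left hsum (by norm_num : (0:ℝ) ≤ 3)]
          _ = ((N:ℝ)+1) * ((3/r)^n * ((n+N).choose (N+1) : ℝ) * (15/r)^(N+1)) := by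
              have hc : ((n+N).choose (N+1) : ℝ) * ((N:ℝ)+1) = ((n+N).choose N : ℝ) * (n:ℝ) := by
                exact_mod_cast congrArg (Nat.cast : ℕ → ℝ) hCn
              push_cast
              linear_combination (-(15/r) * (3/r)^n * (15/r)^N) * hc
  refine ⟨3/r, 15/r, hq, hm, fun N => ?_⟩
  have := hbd N 1 le_rfl
  simpa using this
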